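/- In H^*(Fl(2,3;5)) as above, σ_1^2 ζ^4 = σ_{3,3} + 2 σ_{3,2} ζ + (σ_{2,2} + σ_{3,1}) ζ^2, and this element does not lie in the Q-span of σ_1^6 = σ_{3,3}, σ_1^5 ζ (a nonzero multiple of σ_{3,2} ζ), and σ_1^4 ζ^2 = (2σ_{2,2} + 3σ_{3,1}) ζ^2, inside H^{12}(X,Q) = Q σ_{3,3} ⊕ Q σ_{3,2} ζ ⊕ Q σ_{3,1} ζ^2 ⊕ Q σ_{2,2} ζ^2. Consequently σ_1^6, σ_1^5 ζ, σ_1^4 ζ^2, σ_1^2 ζ^4 form a basis of H^{12}(X,Q). -/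
import Mathlib


/-- In `H^*(Fl(2,3;5))`,
`σ₁²ζ⁴ = σ₃₃ + 2σ₃₂ζ + (σ₂₂ + σ₃₁)ζ²`, and this element does not lie in the
span of `σ₁⁶`, `σ₁⁵ζ`, `σ₁⁴ζ²` inside
`H¹²(X,ℚ) = ℚσ₃₃ ⊕ ℚσ₃₂ζ ⊕ ℚσ₃₁ζ² ⊕ ℚσ₂₂ζ²`. Consequently
`σ₁⁶, σ₁⁵ζ, σ₁⁴ζ², σ₁²ζ⁴` form a basis of `H¹²(X,ℚ)`. -/
theorem stmt11 (H : Type*) [CommRing H] [Algebra ℚ H]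
    (σ1 σ2 σ3 σ11 σ21 σ31 σ22 σ32 σ33 ζ : H)
    (hζ : ζ ^ 3 + σ1 * ζ ^ 2 + σ2 * ζ + σ3 = 0)
    (p1 : σ1 * σ1 = σ2 + σ11)
    (p2 : σ1 * σ2 = σ3 + σ21)
    (p3 : σ1 * σ11 = σ21)
    (p4 : σ1 * σ3 = σ31)
    (p5 : σ1 * σ21 = σ31 + σ22)
    (p6 : σ1 * σ31 = σ32)
    (p7 : σ1 * σ22 = σ32)
    (p8 : σ1 * σ32 = σ33)
    (hbasis : LinearIndependent ℚ ![σ33, σ32 * ζ, σ31 * ζ ^ 2, σ22 * ζ ^ 2]) :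
    σ1 ^ 2 * ζ ^ 4 = σ33 + 2 * (σ32 * ζ) + (σ22 + σ31) * ζ ^ 2 ∧
    σ1 ^ 2 * ζ ^ 4 ∉
      Submodule.span ℚ ({σ1 ^ 6, σ1 ^ 5 * ζ, σ1 ^ 4 * ζ ^ 2} : Set H) ∧
    LinearIndependent ℚ ![σ1 ^ 6, σ1 ^ 5 * ζ, σ1 ^ 4 * ζ ^ 2, σ1 ^ 2 * ζ ^ 4] ∧
    Submodule.span ℚ
      ({σ1 ^ 6, σ1 ^ 5 * ζ, σ1 ^ 4 * ζ ^ 2, σ1 ^ 2 * ζ ^ 4} : Set H) =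
    Submodule.span ℚ ({σ33, σ32 * ζ, σ31 * ζ ^ 2, σ22 * ζ ^ 2} : Set H) := by
  -- numeric cast helper
  have cq : ∀ (n : ℕ) (x : H), (n : ℚ) • x = (n : H) * x := by
    intro n x; rw [Algebra.smul_def, map_natCast]
  -- degree computations
  have e4 : ζ ^ 4 = σ11 * ζ ^ 2 + σ21 * ζ + σ31 := by
    linear_combination (ζ - σ1) * hζ + ζ ^ 2 * p1 + ζ * p2 + p4
  have e5 : σ1 * ζ ^ 4 = σ21 * ζ ^ 2 + (σ31 + σ22) * ζ + σ32 := by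
    linear_combination σ1 * e4 + ζ ^ 2 * p3 + ζ * p5 + p6
  have h1 : σ1 ^ 2 * ζ ^ 4 = σ33 + 2 * (σ32 * ζ) + (σ22 + σ31) * ζ ^ 2 := by
    linear_combination σ1 * e5 + ζ ^ 2 * p5 + ζ * (p6 + p7) + p8
  have h6 : σ1 ^ 6 = 5 * σ33 := by
    linear_combination σ1 ^ 4 * p1 + σ1 ^ 3 * (p2 + p3) + σ1 ^ 2 * (p4 + 2 * p5)
      + σ1 * (3 * p6 + 2 * p7) + 5 * p8
  have h5 : σ1 ^ 5 * ζ = 5 * (σ32 * ζ) := by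
    linear_combination ζ * (σ1 ^ 3 * p1 + σ1 ^ 2 * (p2 + p3) + σ1 * (p4 + 2 * p5)
      + (3 * p6 + 2 * p7))
  have h4 : σ1 ^ 4 * ζ ^ 2 = 3 * (σ31 * ζ ^ 2) + 2 * (σ22 * ζ ^ 2) := by
    linear_combination ζ ^ 2 * (σ1 ^ 2 * p1 + σ1 * (p2 + p3) + (p4 + 2 * p5))
  -- smul versions
  have h6' : σ1 ^ 6 = (5 : ℚ) • σ33 := by
    rw [h6, show ((5:ℚ)) = ((5:ℕ):ℚ) by norm_num, cq]; norm_num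
  have h5' : σ1 ^ 5 * ζ = (5 : ℚ) • (σ32 * ζ) := by
    rw [h5, show ((5:ℚ)) = ((5:ℕ):ℚ) by norm_num, cq]; norm_num
  have h4' : σ1 ^ 4 * ζ ^ 2 = (3 : ℚ) • (σ31 * ζ ^ 2) + (2 : ℚ) • (σ22 * ζ ^ 2) := by
    rw [h4, show ((3:ℚ)) = ((3:ℕ):ℚ) by norm_num, show ((2:ℚ)) = ((2:ℕ):ℚ) by norm_num,
      cq, cq]; norm_num
  have h1' : σ1 ^ 2 * ζ ^ 4
      = σ33 + (2 : ℚ) • (σ32 * ζ) + (σ31 * ζ ^ 2) + (σ22 * ζ ^ 2) := by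
    rw [show ((2:ℚ)) = ((2:ℕ):ℚ) by norm_num, cq]
    linear_combination h1
  have hli := Fintype.linearIndependent_iff.mp hbasis
  refine ⟨h1, ?_, ?_, ?_⟩
  · -- non-membership
    intro hmem
    rw [Submodule.mem_span_insert] at hmem
    obtain ⟨r, z, hz, hx⟩ := hmem
    rw [Submodule.mem_span_insert] at hz
    obtain ⟨s, w, hw, hzz⟩ := hz
    rw [Submodule.mem_span_singleton] at hw
    obtain ⟨t, ht⟩ := hw
    have heq : σ1 ^ 2 * ζ ^ 4
        = r • (σ1 ^ 6) + s • (σ1 ^ 5 * ζ) + t • (σ1 ^ 4 * ζ ^ 2) := by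
      rw [hx, hzz, ← ht]; module
    rw [h6', h5', h4', h1'] at heq
    have hz2 := hli ![5 * r - 1, 5 * s - 2, 3 * t - 1, 2 * t - 1] (by
      rw [Fin.sum_univ_four]
      simp only [Matrix.cons_val_zero, Matrix.cons_val_one, Matrix.head_cons,
        Matrix.cons_val_two, Matrix.tail_cons, Matrix.cons_val_three]
      linear_combination (norm := module) -heq)
    have c2 := hz2 2
    have c3 := hz2 3
    simp only [Matrix.cons_val_two, Matrix.tail_cons, Matrix.cons_val_three,
      Matrix.head_cons, Matrix.cons_val_one] at c2 c3
    have ht3 : (3:ℚ) * t - 1 = 0 := c2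
    have ht2 : (2:ℚ) * t - 1 = 0 := c3
    linarith
  · -- linear independence
    rw [Fintype.linearIndependent_iff]
    intro g hg
    rw [Fin.sum_univ_four] at hg
    simp only [Matrix.cons_val_zero, Matrix.cons_val_one, Matrix.head_cons,
      Matrix.cons_val_two, Matrix.tail_cons, Matrix.cons_val_three] at hg
    rw [h6', h5', h4', h1'] at hg
    have hz2 := hli ![5 * g 0 + g 3, 5 * g 1 + 2 * g 3, 3 * g 2 + g 3, 2 * g 2 + g 3] (by
      rw [Fin.sum_univ_four]
      simp only [Matrix.cons_val_zero, Matrix.cons_val_one, Matrix.head_cons,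
        Matrix.cons_val_two, Matrix.tail_cons, Matrix.cons_val_three]
      linear_combination (norm := module) hg)
    have c0 := hz2 0
    have c1 := hz2 1
    have c2 := hz2 2
    have c3 := hz2 3
    simp only [Matrix.cons_val_zero, Matrix.cons_val_one, Matrix.head_cons,
      Matrix.cons_val_two, Matrix.tail_cons, Matrix.cons_val_three] at c0 c1 c2 c3
    intro i
    fin_cases i <;> simp <;> linarith
  · -- span equality
    apply le_antisymm <;> rw [Submodule.span_le] <;> intro x hx
    · simp only [Set.mem_insert_iff, Set.mem_singleton_iff] at hx
      have m0 : σ33 ∈ Submodule.span ℚ ({σ33, σ32 * ζ, σ31 * ζ ^ 2, σ22 * ζ ^ 2} : Set H) :=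
        Submodule.subset_span (by simp)
      have m1 : σ32 * ζ ∈ Submodule.span ℚ ({σ33, σ32 * ζ, σ31 * ζ ^ 2, σ22 * ζ ^ 2} : Set H) :=
        Submodule.subset_span (by simp)
      have m2 : σ31 * ζ ^ 2 ∈ Submodule.span ℚ ({σ33, σ32 * ζ, σ31 * ζ ^ 2, σ22 * ζ ^ 2} : Set H) :=
        Submodule.subset_span (by simp)
      have m3 : σ22 * ζ ^ 2 ∈ Submodule.span ℚ ({σ33, σ32 * ζ, σ31 * ζ ^ 2, σ22 * ζ ^ 2} : Set H) :=
        Submodule.subset_span (by simp)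
      rcases hx with h | h | h | h <;> subst h
      · rw [h6']; exact Submodule.smul_mem _ _ m0
      · rw [h5']; exact Submodule.smul_mem _ _ m1
      · rw [h4']; exact Submodule.add_mem _ (Submodule.smul_mem _ _ m2) (Submodule.smul_mem _ _ m3)
      · rw [h1']
        exact Submodule.add_mem _ (Submodule.add_mem _
          (Submodule.add_mem _ m0 (Submodule.smul_mem _ _ m1)) m2) m3
    · simp only [Set.mem_insert_iff, Set.mem_singleton_iff] at hx
      set S := Submodule.span ℚ
        ({σ1 ^ 6, σ1 ^ 5 * ζ, σ1 ^ 4 * ζ ^ 2, σ1 ^ 2 * ζ ^ 4} : Set H) with hS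
      have n0 : σ1 ^ 6 ∈ S := Submodule.subset_span (by simp)
      have n1 : σ1 ^ 5 * ζ ∈ S := Submodule.subset_span (by simp)
      have n2 : σ1 ^ 4 * ζ ^ 2 ∈ S := Submodule.subset_span (by simp)
      have n3 : σ1 ^ 2 * ζ ^ 4 ∈ S := Submodule.subset_span (by simp)
      have b0 : σ33 = (1/5 : ℚ) • (σ1 ^ 6) := by rw [h6', smul_smul]; norm_num
      have b1 : σ32 * ζ = (1/5 : ℚ) • (σ1 ^ 5 * ζ) := by rw [h5', smul_smul]; norm_num
      have b2 : σ31 * ζ ^ 2 = (2/5 : ℚ) • (σ1 ^ 6) + (4/5 : ℚ) • (σ1 ^ 5 * ζ)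
          + (σ1 ^ 4 * ζ ^ 2) - (2 : ℚ) • (σ1 ^ 2 * ζ ^ 4) := by
        rw [h6', h5', h4', h1']; module
      have b3 : σ22 * ζ ^ 2 = (3 : ℚ) • (σ1 ^ 2 * ζ ^ 4) - (σ1 ^ 4 * ζ ^ 2)
          - (3/5 : ℚ) • (σ1 ^ 6) - (6/5 : ℚ) • (σ1 ^ 5 * ζ) := by
        rw [h6', h5', h4', h1']; module
      rcases hx with h | h | h | h <;> subst h
      · rw [b0]; exact Submodule.smul_mem _ _ n0
      · rw [b1]; exact Submodule.smul_mem _ _ n1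
      · rw [b2]
        exact Submodule.sub_mem _ (Submodule.add_mem _ (Submodule.add_mem _
          (Submodule.smul_mem _ _ n0) (Submodule.smul_mem _ _ n1)) n2)
          (Submodule.smul_mem _ _ n3)
      · rw [b3]
        exact Submodule.sub_mem _ (Submodule.sub_mem _ (Submodule.sub_mem _
          (Submodule.smul_mem _ _ n3) n2) (Submodule.smul_mem _ _ n0))
          (Submodule.smul_mem _ _ n1)
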